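/- In a partial cube, the Djoković–Winkler relation Θ is an equivalence relation on the edge set. -/

import Mathlib

open SimpleGraph

/-- The hypercube graph `Q_d` on `{0,1}^d`: two vertices are adjacent iff they
differ in exactly one coordinate. -/
def hypercubeGraph (d : ℕ) : SimpleGraph (Fin d → Bool) where
  Adj x y := hammingDist x y = 1
  symm := by
    constructor
    intro x y h
    rwa [hammingDist_comm]
  loopless := by
    constructor
    intro x h
    simp [hammingDist_self] at h

/-- A partial cube: a connected simple graph admitting an isometric embedding
into some hypercube. -/
def IsPartialCube {V : Type} (G : SimpleGraph V) : Prop :=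
  G.Connected ∧
    ∃ (d : ℕ) (φ : V → (Fin d → Bool)), Function.Injective φ ∧
      ∀ v w : V, (hypercubeGraph d).dist (φ v) (φ w) = G.dist v w

/-- The Djoković–Winkler relation `Θ` on (unordered) edges: `e = xy` and
`f = uv` are related iff `d(x,u) + d(y,v) ≠ d(x,v) + d(y,u)`. -/
def DWRel {V : Type} (G : SimpleGraph V) (e f : Sym2 V) : Prop :=
  ∃ x y u v : V, e = s(x, y) ∧ f = s(u, v) ∧
    G.dist x u + G.dist y v ≠ G.dist x v + G.dist y u

section Aux

lemma hamming_le_walk_length {d : ℕ} {a b : Fin d → Bool}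
    (p : (hypercubeGraph d).Walk a b) : hammingDist a b ≤ p.length := by
  induction p with
  | nil => simp [hammingDist_self]
  | @cons x y z h p ih =>
    calc hammingDist x z ≤ hammingDist x y + hammingDist y z := hammingDist_triangle _ _ _
    _ ≤ 1 + p.length := by have : hammingDist x y = 1 := h; omega
    _ = (SimpleGraph.Walk.cons h p).length := by simp [Nat.add_comm]

lemma exists_walk_hamming {d : ℕ} : ∀ n (a b : Fin d → Bool), hammingDist a b = n →
    ∃ p : (hypercubeGraph d).Walk a b, p.length = n := by
  intro n
  induction n with
  | zero => intro a b h; obtain rfl := hammingDist_eq_zero.mp h; exact ⟨.nil, rfl⟩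
  | succ n ih =>
    intro a b h
    have hne : a ≠ b := by intro h'; subst h'; simp [hammingDist_self] at h
    have : ∃ i, a i ≠ b i := by
      by_contra hc
      push_neg at hc
      exact hne (funext hc)
    obtain ⟨i, hi⟩ := this
    set a' := Function.update a i (b i) with ha'
    have hset : ∀ j, (a' j ≠ b j) ↔ (a j ≠ b j ∧ j ≠ i) := by
      intro j
      by_cases hj : j = i
      · subst hj; simp [ha', Function.update_self]
      · simp [ha', Function.update_of_ne hj, hj]
    have h1 : hammingDist a a' = 1 := by
      rw [hammingDist]
      rw [Finset.card_eq_one]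
      refine ⟨i, ?_⟩
      ext j
      by_cases hj : j = i
      · subst hj; simp [ha', Function.update_self, hi]
      · simp [ha', Function.update_of_ne hj, hj]
    have h2 : hammingDist a' b = n := by
      have : ({j | a' j ≠ b j} : Finset (Fin d)) = ({j | a j ≠ b j} : Finset (Fin d)).erase i := by
        ext j
        simp [hset j, and_comm, Finset.mem_erase]
      rw [hammingDist, this, Finset.card_erase_of_mem (by simpa using hi)]
      rw [hammingDist] at h
      omega
    obtain ⟨p, hp⟩ := ih a' b h2
    exact ⟨.cons (show (hypercubeGraph d).Adj a a' from h1) p, by simp [hp]⟩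

lemma hypercube_dist {d : ℕ} (a b : Fin d → Bool) :
    (hypercubeGraph d).dist a b = hammingDist a b := by
  obtain ⟨p, hp⟩ := exists_walk_hamming (hammingDist a b) a b rfl
  refine le_antisymm (hp ▸ SimpleGraph.dist_le p) ?_
  have hr : (hypercubeGraph d).Reachable a b := ⟨p⟩
  obtain ⟨q, hq⟩ := hr.exists_walk_length_eq_dist
  calc hammingDist a b ≤ q.length := hamming_le_walk_length q
  _ = _ := hq

lemma diffSet_eq {n : ℕ} {a b : Fin n → Bool} (h : hammingDist a b = 1) :
    ∃ i, ({j | a j ≠ b j} : Finset (Fin n)) = {i} := by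
  rw [hammingDist] at h
  exact Finset.card_eq_one.mp h

lemma diff_unique {n : ℕ} {c d : Fin n → Bool} (h : hammingDist c d = 1) {i j : Fin n}
    (hi : c i ≠ d i) (hj : c j ≠ d j) : i = j := by
  obtain ⟨k, hk⟩ := diffSet_eq h
  have h1 : i ∈ ({j | c j ≠ d j} : Finset (Fin n)) := by simp [hi]
  have h2 : j ∈ ({j | c j ≠ d j} : Finset (Fin n)) := by simp [hj]
  rw [hk, Finset.mem_singleton] at h1 h2
  exact h1.trans h2.symm

lemma key {n : ℕ} {a b c d : Fin n → Bool} (hab : hammingDist a b = 1)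
    (hcd : hammingDist c d = 1) :
    (hammingDist a c + hammingDist b d ≠ hammingDist a d + hammingDist b c) ↔
      ∃ i, a i ≠ b i ∧ c i ≠ d i := by
  obtain ⟨i, hi⟩ := diffSet_eq hab
  obtain ⟨j, hj⟩ := diffSet_eq hcd
  have hmi : ∀ k, a k ≠ b k ↔ k = i := by
    intro k
    rw [← Finset.mem_singleton, ← hi]
    simp
  have hmj : ∀ k, c k ≠ d k ↔ k = j := by
    intro k
    rw [← Finset.mem_singleton, ← hj]
    simp
  set F : Fin n → ℕ := fun k => (if a k ≠ c k then 1 else 0) + (if b k ≠ d k then 1 else 0)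
    with hF
  set G : Fin n → ℕ := fun k => (if a k ≠ d k then 1 else 0) + (if b k ≠ c k then 1 else 0)
    with hG
  have hsum : hammingDist a c + hammingDist b d = ∑ k, F k ∧
      hammingDist a d + hammingDist b c = ∑ k, G k := by
    constructor <;>
    · simp only [hammingDist, Finset.card_filter, hF, hG, Finset.sum_add_distrib]
  have hoff : ∀ k, ¬(a k ≠ b k ∧ c k ≠ d k) → F k = G k := by
    intro k hk
    simp only [hF, hG]
    rcases Bool.eq_false_or_eq_true (a k) with h1 | h1 <;>
    rcases Bool.eq_false_or_eq_true (b k) with h2 | h2 <;>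
    rcases Bool.eq_false_or_eq_true (c k) with h3 | h3 <;>
    rcases Bool.eq_false_or_eq_true (d k) with h4 | h4 <;>
    simp_all
  rw [hsum.1, hsum.2]
  by_cases hij : i = j
  · subst hij
    constructor
    · intro _
      exact ⟨i, (hmi i).mpr rfl, (hmj i).mpr rfl⟩
    · intro _
      have hrest : ∑ k ∈ Finset.univ.erase i, F k = ∑ k ∈ Finset.univ.erase i, G k := by
        apply Finset.sum_congr rfl
        intro k hk
        have hki : k ≠ i := (Finset.mem_erase.mp hk).1
        exact hoff k (by rw [hmi, hmj]; tauto)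
      have hFi : F i ≠ G i := by
        have h1 : a i ≠ b i := (hmi i).mpr rfl
        have h2 : c i ≠ d i := (hmj i).mpr rfl
        simp only [hF, hG]
        rcases Bool.eq_false_or_eq_true (a i) with e1 | e1 <;>
        rcases Bool.eq_false_or_eq_true (b i) with e2 | e2 <;>
        rcases Bool.eq_false_or_eq_true (c i) with e3 | e3 <;>
        rcases Bool.eq_false_or_eq_true (d i) with e4 | e4 <;>
        simp_all
      rw [← Finset.add_sum_erase _ F (Finset.mem_univ i),
          ← Finset.add_sum_erase _ G (Finset.mem_univ i), hrest]
      omega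
  · constructor
    · intro hne
      exfalso
      apply hne
      apply Finset.sum_congr rfl
      intro k _
      apply hoff
      rw [hmi, hmj]
      rintro ⟨rfl, rfl⟩
      exact hij rfl
    · rintro ⟨k, hk1, hk2⟩
      exact absurd (((hmi k).mp hk1).symm.trans ((hmj k).mp hk2)) hij

end Aux

/-- In a partial cube, the Djoković–Winkler relation `Θ` is an equivalence
relation on the edge set: it is reflexive, symmetric and transitive on the
edges of the graph. -/
theorem dwRel_equivalence_of_isPartialCube {V : Type} (G : SimpleGraph V)
    (hG : IsPartialCube G) :
    (∀ e ∈ G.edgeSet, DWRel G e e) ∧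
    (∀ e ∈ G.edgeSet, ∀ f ∈ G.edgeSet, DWRel G e f → DWRel G f e) ∧
    (∀ e ∈ G.edgeSet, ∀ f ∈ G.edgeSet, ∀ g ∈ G.edgeSet,
      DWRel G e f → DWRel G f g → DWRel G e g) := by
  obtain ⟨hconn, d, φ, hinj, hφ⟩ := hG
  have hdist : ∀ v w : V, G.dist v w = hammingDist (φ v) (φ w) := by
    intro v w
    rw [← hφ, hypercube_dist]
  have hedge : ∀ {x y : V}, G.Adj x y → hammingDist (φ x) (φ y) = 1 := by
    intro x y hxy
    rw [← hdist]
    exact SimpleGraph.dist_eq_one_iff_adj.mpr hxy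
  refine ⟨?_, ?_, ?_⟩
  · intro e he
    induction e using Sym2.ind with
    | _ x y =>
      have hxy : G.Adj x y := (SimpleGraph.mem_edgeSet G).mp he
      refine ⟨x, y, x, y, rfl, rfl, ?_⟩
      have h1 : G.dist x y = 1 := SimpleGraph.dist_eq_one_iff_adj.mpr hxy
      have h2 : G.dist y x = 1 := SimpleGraph.dist_eq_one_iff_adj.mpr hxy.symm
      simp [SimpleGraph.dist_self, h1, h2]
  · rintro e he f hf ⟨x, y, u, v, rfl, rfl, hne⟩
    refine ⟨u, v, x, y, rfl, rfl, ?_⟩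
    have c1 : G.dist u x = G.dist x u := SimpleGraph.dist_comm
    have c2 : G.dist v y = G.dist y v := SimpleGraph.dist_comm
    have c3 : G.dist u y = G.dist y u := SimpleGraph.dist_comm
    have c4 : G.dist v x = G.dist x v := SimpleGraph.dist_comm
    omega
  · rintro e he f hf g hg ⟨x, y, u, v, rfl, hf1, h1⟩ ⟨u', v', p, q, hf2, rfl, h2⟩
    have hxy : G.Adj x y := (SimpleGraph.mem_edgeSet G).mp he
    have huv : G.Adj u v := (SimpleGraph.mem_edgeSet G).mp (hf1 ▸ hf)
    have hu'v' : G.Adj u' v' := (SimpleGraph.mem_edgeSet G).mp (hf2 ▸ hf)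
    have hpq : G.Adj p q := (SimpleGraph.mem_edgeSet G).mp hg
    rw [hdist, hdist, hdist, hdist] at h1 h2
    obtain ⟨i, hi1, hi2⟩ := (key (hedge hxy) (hedge huv)).mp h1
    obtain ⟨j, hj1, hj2⟩ := (key (hedge hu'v') (hedge hpq)).mp h2
    have huvj : φ u j ≠ φ v j := by
      rcases Sym2.eq_iff.mp (hf1.symm.trans hf2) with ⟨rfl, rfl⟩ | ⟨rfl, rfl⟩
      · exact hj1
      · exact hj1.symm
    have hij : i = j := diff_unique (hedge huv) hi2 huvj
    refine ⟨x, y, p, q, rfl, rfl, ?_⟩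
    rw [hdist, hdist, hdist, hdist]
    exact (key (hedge hxy) (hedge hpq)).mpr ⟨i, hi1, by rw [hij]; exact hj2⟩
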